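/- Let p ≥ 1, ℓ ≥ 0, b₀ ≥ 1, w₀ ≥ 0 be integers, s₀ = b₀ + w₀, and define the sequence (h_n) by h_0 = 1 and h_{n+1} = (s₀ + n + ℓ⌊n/p⌋)·h_n (h_n is the number of histories of the Young–Pólya urn of period p and parameter ℓ after n steps). Then for all integers m ≥ 0 and 0 ≤ i ≤ p−1: h_{pm+i} = (p+ℓ)^{pm} · (Γ(s₀+(p+ℓ)m+i)/Γ(s₀+(p+ℓ)m)) · ∏_{j=0}^{p−1} Γ(m + (s₀+j)/(p+ℓ))/Γ((s₀+j)/(p+ℓ)). -/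

import Mathlib

open Real

/-- `histCount p ℓ s₀ n` is the number of histories after `n` steps of the Young–Pólya
urn of period `p` and parameter `ℓ` started with `s₀` balls:
`h_0 = 1` and `h_{n+1} = (s₀ + n + ℓ⌊n/p⌋) h_n`. -/
def histCount (p ℓ s₀ : ℕ) : ℕ → ℕ
  | 0 => 1
  | n + 1 => (s₀ + n + ℓ * (n / p)) * histCount p ℓ s₀ n

lemma hist_prod (p ℓ s : ℕ) (hp : 1 ≤ p) :
    ∀ m i, i ≤ p → histCount p ℓ s (p * m + i) =
      (∏ k ∈ Finset.range m, ∏ j ∈ Finset.range p, (s + (p + ℓ) * k + j)) *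
        ∏ j ∈ Finset.range i, (s + (p + ℓ) * m + j) := by
  have step : ∀ m i, i < p → histCount p ℓ s (p * m + (i+1)) =
      (s + (p + ℓ) * m + i) * histCount p ℓ s (p * m + i) := by
    intro m i hip
    show (s + (p*m+i) + ℓ * ((p*m+i)/p)) * _ = _
    rw [Nat.mul_add_div (by omega), Nat.div_eq_of_lt hip, Nat.add_zero,
      show s + (p * m + i) + ℓ * m = s + (p + ℓ) * m + i from by ring]
    rfl
  intro m
  induction m with
  | zero =>
    intro i hi
    induction i with
    | zero => simp [histCount]
    | succ i ih =>
      rw [step 0 i (by omega), ih (by omega), Finset.prod_range_succ]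
      ring
  | succ m ihm =>
    have base : histCount p ℓ s (p * (m+1)) =
        ∏ k ∈ Finset.range (m+1), ∏ j ∈ Finset.range p, (s + (p + ℓ) * k + j) := by
      have : p * (m+1) = p * m + p := by ring
      rw [this, ihm p le_rfl, Finset.prod_range_succ]
    intro i hi
    induction i with
    | zero => simpa using base
    | succ i ih =>
      rw [step (m+1) i (by omega), ih (by omega),
        Finset.prod_range_succ (fun j => s + (p + ℓ) * (m+1) + j) i]
      ring

lemma Gamma_add_nat' (x : ℝ) (hx : 0 < x) (n : ℕ) :
    Real.Gamma (x + n) = (∏ j ∈ Finset.range n, (x + j)) * Real.Gamma x := by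
  induction n with
  | zero => simp
  | succ n ih =>
    have : x + (n+1 : ℕ) = (x + n) + 1 := by push_cast; ring
    rw [this, Real.Gamma_add_one (by positivity), ih, Finset.prod_range_succ]
    ring


/-- **Theorem (hypergeometric closed form for the number of histories).**
For the Young–Pólya urn of period `p` and parameter `ℓ` with `s₀ = b₀ + w₀` initial balls,
for all `m ≥ 0` and `0 ≤ i ≤ p-1`,
`h_{pm+i} = (p+ℓ)^{pm} · Γ(s₀+(p+ℓ)m+i)/Γ(s₀+(p+ℓ)m) · ∏_{j=0}^{p-1} Γ(m+(s₀+j)/(p+ℓ))/Γ((s₀+j)/(p+ℓ))`. -/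
theorem histCount_hypergeometric_closed_form
    (p ℓ b₀ w₀ : ℕ) (hp : 1 ≤ p) (hb : 1 ≤ b₀) (m i : ℕ) (hi : i ≤ p - 1) :
    (histCount p ℓ (b₀ + w₀) (p * m + i) : ℝ) =
      ((p : ℝ) + (ℓ : ℝ)) ^ (p * m) *
        (Real.Gamma (((b₀ + w₀ : ℕ) : ℝ) + ((p : ℝ) + (ℓ : ℝ)) * (m : ℝ) + (i : ℝ)) /
          Real.Gamma (((b₀ + w₀ : ℕ) : ℝ) + ((p : ℝ) + (ℓ : ℝ)) * (m : ℝ))) *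
        ∏ j ∈ Finset.range p,
          Real.Gamma ((m : ℝ) + ((b₀ + w₀ + j : ℕ) : ℝ) / ((p : ℝ) + (ℓ : ℝ))) /
            Real.Gamma (((b₀ + w₀ + j : ℕ) : ℝ) / ((p : ℝ) + (ℓ : ℝ))) := by
  set s : ℕ := b₀ + w₀ with hs
  have hq : (0:ℝ) < (p:ℝ) + (ℓ:ℝ) := by positivity
  have hspos : (0:ℝ) < (s:ℝ) := by positivity
  have hx : (0:ℝ) < (s:ℝ) + ((p:ℝ) + (ℓ:ℝ)) * m := by positivity
  -- Gamma ratio 1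
  have hr1 : Real.Gamma ((s:ℝ) + ((p:ℝ)+(ℓ:ℝ)) * m + i) /
      Real.Gamma ((s:ℝ) + ((p:ℝ)+(ℓ:ℝ)) * m)
      = ∏ j ∈ Finset.range i, ((s:ℝ) + ((p:ℝ)+(ℓ:ℝ)) * m + j) := by
    rw [Gamma_add_nat' _ hx i, mul_div_assoc,
      div_self (Real.Gamma_pos_of_pos hx).ne', mul_one]
  -- Gamma ratio 2
  have hr2 : ∀ j : ℕ, Real.Gamma ((m:ℝ) + ((s + j : ℕ) : ℝ) / ((p:ℝ)+(ℓ:ℝ))) /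
      Real.Gamma (((s + j : ℕ) : ℝ) / ((p:ℝ)+(ℓ:ℝ)))
      = ∏ k ∈ Finset.range m, (((s + j : ℕ) : ℝ) / ((p:ℝ)+(ℓ:ℝ)) + k) := by
    intro j
    have hc : (0:ℝ) < ((s + j : ℕ) : ℝ) / ((p:ℝ)+(ℓ:ℝ)) := by
      apply div_pos _ hq; push_cast; positivity
    rw [add_comm (m:ℝ), Gamma_add_nat' _ hc m, mul_div_assoc,
      div_self (Real.Gamma_pos_of_pos hc).ne', mul_one]
  rw [hr1, Finset.prod_congr rfl (fun j _ => hr2 j),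
    show ((p:ℝ)+(ℓ:ℝ)) ^ (p * m) = ∏ j ∈ Finset.range p, ∏ k ∈ Finset.range m,
      ((p:ℝ)+(ℓ:ℝ)) from by simp [Finset.prod_const, ← pow_mul, mul_comm p m]]
  conv_lhs => rw [hist_prod p ℓ s hp m i (by omega)]
  push_cast
  have hinner2 : ∀ j ∈ Finset.range p,
      (∏ _k ∈ Finset.range m, ((p:ℝ)+(ℓ:ℝ))) *
        ∏ k ∈ Finset.range m, (((s:ℝ) + (j:ℝ)) / ((p:ℝ)+(ℓ:ℝ)) + (k:ℝ))
      = ∏ k ∈ Finset.range m, ((s:ℝ) + ((p:ℝ)+(ℓ:ℝ)) * (k:ℝ) + (j:ℝ)) := by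
    intro j _
    rw [← Finset.prod_mul_distrib]
    refine Finset.prod_congr rfl fun k _ => ?_
    field_simp
    ring
  rw [mul_right_comm, ← Finset.prod_mul_distrib, Finset.prod_congr rfl hinner2,
    Finset.prod_comm]
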